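/- For every integer k ≥ 1, ∫_0^π W_k(0,η) · (∂W_k/∂ξ)(0,η) dη = −(kπ / 2^{2k-1}) · C(k-1, ⌊(k-1)/2⌋)², where (∂W_k/∂ξ)(0,η) denotes the partial derivative of W_k with respect to its first variable evaluated at (0,η). -/

import Mathlib

/-- The profile `W_k` in elliptic coordinates:
`W_k(ξ,η) = 2^{1-k} · ∑_{j=0}^{⌊(k-1)/2⌋} C(k,j)·exp(−(k−2j)ξ)·sin((k−2j)η)`. -/
noncomputable def Wk (k : ℕ) (ξ η : ℝ) : ℝ :=
  (2 : ℝ) ^ (1 - (k : ℤ)) *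
    ∑ j ∈ Finset.range ((k - 1) / 2 + 1),
      (Nat.choose k j : ℝ) * Real.exp (-(((k : ℝ) - 2 * j)) * ξ) *
        Real.sin (((k : ℝ) - 2 * j) * η)

lemma integral_cos_c (c : ℝ) (hc : c ≠ 0) :
    ∫ η in (0:ℝ)..Real.pi, Real.cos (c * η) = c⁻¹ * Real.sin (c * Real.pi) := by
  rw [intervalIntegral.integral_comp_mul_left (fun x => Real.cos x) hc]
  simp [integral_cos]

lemma orth (m n : ℕ) (hm : 0 < m) (hn : 0 < n) :
    ∫ η in (0:ℝ)..Real.pi, Real.sin (m * η) * Real.sin (n * η)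
      = if m = n then Real.pi / 2 else 0 := by
  have key : ∀ η : ℝ, Real.sin (m*η) * Real.sin (n*η)
      = (Real.cos (((m:ℝ) - n) * η) - Real.cos (((m:ℝ) + n) * η)) / 2 := by
    intro η
    rw [show ((m:ℝ)-n)*η = m*η - n*η by ring, show ((m:ℝ)+n)*η = m*η + n*η by ring,
      Real.cos_sub, Real.cos_add]
    ring
  simp only [key]
  rw [intervalIntegral.integral_div, intervalIntegral.integral_sub
    (Continuous.intervalIntegrable (by continuity) _ _)
    (Continuous.intervalIntegrable (by continuity) _ _)]
  have h2 : (m:ℝ) + n ≠ 0 := by positivity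
  rw [integral_cos_c _ h2]
  have e2 : ((m:ℝ) + n) * Real.pi = (((m:ℕ) + n : ℕ) : ℝ) * Real.pi := by push_cast; ring
  rw [e2, Real.sin_nat_mul_pi]
  by_cases h : m = n
  · subst h
    rw [if_pos rfl, sub_self]
    simp only [zero_mul, Real.cos_zero]
    simp [intervalIntegral.integral_const]
  · rw [if_neg h]
    have h1 : (m:ℝ) - n ≠ 0 := by
      intro hh; exact h (by exact_mod_cast sub_eq_zero.mp hh)
    rw [integral_cos_c _ h1]
    have e1 : ((m:ℝ) - n) * Real.pi = (((m:ℤ) - n : ℤ) : ℝ) * Real.pi := by push_cast; ring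
    rw [e1, Real.sin_int_mul_pi]
    simp

lemma comb_id (k : ℕ) (hk : 1 ≤ k) :
    ∑ j ∈ Finset.range ((k - 1) / 2 + 1), ((k : ℝ) - 2 * j) * (Nat.choose k j : ℝ) ^ 2
      = (k : ℝ) * (Nat.choose (k - 1) ((k - 1) / 2) : ℝ) ^ 2 := by
  set m := (k - 1) / 2 with hm
  set F : ℕ → ℝ := fun j => if j = 0 then 0 else (k : ℝ) * (Nat.choose (k - 1) (j - 1) : ℝ) ^ 2
    with hF
  have key : ∀ j ∈ Finset.range (m + 1),
      ((k : ℝ) - 2 * j) * (Nat.choose k j : ℝ) ^ 2 = F (j + 1) - F j := by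
    intro j hj
    have hjm : j ≤ m := by
      simpa [Nat.lt_succ_iff] using Finset.mem_range.mp hj
    have h2j : 2 * j ≤ k - 1 := by
      calc 2 * j ≤ 2 * m := by omega
      _ ≤ k - 1 := by omega
    match j with
    | 0 => simp [hF]
    | s + 1 =>
      have hs1 : s + 1 ≤ k - 1 := by omega
      have pascal : (Nat.choose k (s + 1) : ℝ)
          = Nat.choose (k - 1) s + Nat.choose (k - 1) (s + 1) := by
        have : Nat.choose ((k-1)+1) (s+1) = Nat.choose (k-1) s + Nat.choose (k-1) (s+1) :=
          Nat.choose_succ_succ (k-1) s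
        rw [show (k-1)+1 = k by omega] at this
        exact_mod_cast this
      have id1 : (k : ℝ) * Nat.choose (k - 1) s = (s + 1) * Nat.choose k (s + 1) := by
        have h0 := Nat.add_one_mul_choose_eq (k - 1) s
        rw [show (k-1) + 1 = k by omega] at h0
        have : (k * (k-1).choose s : ℝ) = (k.choose (s+1) * (s+1) : ℕ) := by
          exact_mod_cast congrArg Nat.cast h0
        push_cast at this; linarith [this]
      have id2 : (k : ℝ) * Nat.choose (k - 1) (s + 1) = ((k : ℝ) - (s + 1)) * Nat.choose k (s + 1) := by
        have h1 := Nat.add_one_mul_choose_eq (k - 1) (s + 1)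
        rw [show (k-1) + 1 = k by omega] at h1
        have h2 := Nat.choose_succ_right_eq k (s + 1)
        have h3 : k * Nat.choose (k-1) (s+1) = Nat.choose k (s+1) * (k - (s+1)) := by
          rw [h1, h2]
        have hcast : ((k - (s+1) : ℕ) : ℝ) = (k : ℝ) - (s+1) := by
          rw [Nat.cast_sub (by omega : s + 1 ≤ k)]
          push_cast
          ring
        calc (k : ℝ) * Nat.choose (k - 1) (s + 1)
            = ((Nat.choose k (s+1) * (k - (s+1)) : ℕ) : ℝ) := by
              rw [← h3]
              push_cast
              ring
          _ = ((k : ℝ) - (s + 1)) * Nat.choose k (s + 1) := by rw [Nat.cast_mul, hcast]; ring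
      have hFs : F (s + 2) - F (s + 1)
          = (k : ℝ) * ((Nat.choose (k-1) (s+1) : ℝ)^2 - (Nat.choose (k-1) s : ℝ)^2) := by
        simp [hF]; ring
      rw [hFs]
      have expand : ((k : ℝ) - 2 * (s + 1)) * (Nat.choose k (s+1) : ℝ)
          = (k : ℝ) * Nat.choose (k-1) (s+1) - (k : ℝ) * Nat.choose (k-1) s := by
        rw [id1, id2]; ring
      have : ((k : ℝ) - 2 * (s+1 : ℕ)) * (Nat.choose k (s+1) : ℝ) ^ 2
          = ((k : ℝ) * Nat.choose (k-1) (s+1) - (k : ℝ) * Nat.choose (k-1) s)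
            * (Nat.choose (k-1) s + Nat.choose (k-1) (s+1)) := by
        rw [← expand, ← pascal]; push_cast; ring
      rw [this]; push_cast; ring
  rw [Finset.sum_congr rfl key, Finset.sum_range_sub F]
  simp [hF]

lemma cont_ss (a b c : ℝ) : Continuous fun η : ℝ => a * (Real.sin (b * η) * Real.sin (c * η)) := by
  continuity

lemma deriv_Wk (k : ℕ) (η : ℝ) :
    deriv (fun ξ : ℝ => Wk k ξ η) 0
      = (2 : ℝ) ^ (1 - (k : ℤ)) *
          ∑ j ∈ Finset.range ((k - 1) / 2 + 1),
            (Nat.choose k j : ℝ) * (-((k : ℝ) - 2 * j)) * Real.sin (((k : ℝ) - 2 * j) * η) := by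
  have h : HasDerivAt (fun ξ : ℝ => Wk k ξ η)
      ((2 : ℝ) ^ (1 - (k : ℤ)) *
        ∑ j ∈ Finset.range ((k - 1) / 2 + 1),
          (Nat.choose k j : ℝ) * (Real.exp (-(((k : ℝ) - 2 * j)) * 0) * (-((k : ℝ) - 2 * j)))
            * Real.sin (((k : ℝ) - 2 * j) * η)) 0 := by
    unfold Wk
    apply HasDerivAt.const_mul
    apply HasDerivAt.fun_sum
    intro j _
    exact (((((hasDerivAt_id (0:ℝ)).const_mul (-(((k : ℝ) - 2 * j)))).exp).const_mul
      (Nat.choose k j : ℝ)).mul_const _).congr_deriv (by simp [mul_comm])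
  rw [h.deriv]
  simp

/-- For every integer `k ≥ 1`,
`∫_0^π W_k(0,η)·(∂W_k/∂ξ)(0,η) dη = −(kπ / 2^{2k-1}) · C(k-1, ⌊(k-1)/2⌋)²`. -/
theorem integral_Wk_mul_partialXi_closed_form (k : ℕ) (hk : 1 ≤ k) :
    ∫ η in (0:ℝ)..Real.pi, Wk k 0 η * deriv (fun ξ : ℝ => Wk k ξ η) 0
      = -((k : ℝ) * Real.pi / 2 ^ (2 * k - 1)) *
          (Nat.choose (k - 1) ((k - 1) / 2) : ℝ) ^ 2 := by
  set M := (k - 1) / 2 + 1 with hM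
  set P : ℝ := (2 : ℝ) ^ (1 - (k : ℤ)) with hP
  have hcast : ∀ j ∈ Finset.range M, ((k : ℝ) - 2 * j) = ((k - 2 * j : ℕ) : ℝ) := by
    intro j hj
    have : 2 * j ≤ k - 1 := by
      have := Finset.mem_range.mp hj; omega
    push_cast [Nat.cast_sub (by omega : 2 * j ≤ k)]; ring
  have hpos : ∀ j ∈ Finset.range M, 0 < k - 2 * j := by
    intro j hj
    have := Finset.mem_range.mp hj; omega
  have hinj : ∀ j ∈ Finset.range M, ∀ i ∈ Finset.range M, (k - 2*j = k - 2*i) ↔ j = i := by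
    intro j hj i hi
    have h1 := Finset.mem_range.mp hj; have h2 := Finset.mem_range.mp hi
    constructor
    · intro h; omega
    · intro h; rw [h]
  -- pointwise form of the integrand
  have key : ∀ η : ℝ, Wk k 0 η * deriv (fun ξ : ℝ => Wk k ξ η) 0
      = ∑ j ∈ Finset.range M, ∑ i ∈ Finset.range M,
          (P^2 * ((Nat.choose k j : ℝ) * ((Nat.choose k i : ℝ) * (-((k:ℝ) - 2*i)))))
            * (Real.sin (((k - 2*j : ℕ) : ℝ) * η) * Real.sin (((k - 2*i : ℕ) : ℝ) * η)) := by
    intro η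
    rw [deriv_Wk]
    unfold Wk
    rw [show ((2:ℝ) ^ (1 - (k:ℤ))) = P from rfl]
    rw [mul_mul_mul_comm, Finset.sum_mul_sum]
    simp only [Finset.mul_sum]
    refine Finset.sum_congr rfl fun j hj => ?_
    refine Finset.sum_congr rfl fun i hi => ?_
    rw [← hcast j hj, ← hcast i hi]
    simp only [mul_zero, neg_zero, zero_mul, Real.exp_zero]
    ring
  rw [intervalIntegral.integral_congr (fun η _ => key η)]
  rw [intervalIntegral.integral_finset_sum (fun j _ =>
    Continuous.intervalIntegrable (continuous_finset_sum _ fun i _ => cont_ss _ _ _) _ _)]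
  have hterm : ∀ j ∈ Finset.range M,
      (∫ η in (0:ℝ)..Real.pi, ∑ i ∈ Finset.range M,
          (P^2 * ((Nat.choose k j : ℝ) * ((Nat.choose k i : ℝ) * (-((k:ℝ) - 2*i)))))
            * (Real.sin (((k - 2*j : ℕ) : ℝ) * η) * Real.sin (((k - 2*i : ℕ) : ℝ) * η)))
      = (P^2 * ((Nat.choose k j : ℝ) * ((Nat.choose k j : ℝ) * (-((k:ℝ) - 2*j))))) * (Real.pi / 2) := by
    intro j hj
    rw [intervalIntegral.integral_finset_sum (fun i _ =>
      Continuous.intervalIntegrable (cont_ss _ _ _) _ _)]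
    have : ∀ i ∈ Finset.range M,
        (∫ η in (0:ℝ)..Real.pi,
          (P^2 * ((Nat.choose k j : ℝ) * ((Nat.choose k i : ℝ) * (-((k:ℝ) - 2*i)))))
            * (Real.sin (((k - 2*j : ℕ) : ℝ) * η) * Real.sin (((k - 2*i : ℕ) : ℝ) * η)))
        = if i = j then
            (P^2 * ((Nat.choose k j : ℝ) * ((Nat.choose k j : ℝ) * (-((k:ℝ) - 2*j))))) * (Real.pi / 2)
          else 0 := by
      intro i hi
      rw [intervalIntegral.integral_const_mul, orth _ _ (hpos j hj) (hpos i hi)]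
      by_cases h : i = j
      · subst h; rw [if_pos rfl, if_pos rfl]
      · rw [if_neg (fun hh => h ((hinj j hj i hi).mp hh).symm), if_neg h, mul_zero]
    rw [Finset.sum_congr rfl this, Finset.sum_ite_eq' (Finset.range M) j, if_pos hj]
  rw [Finset.sum_congr rfl hterm]
  -- now the algebraic finish
  have : ∑ j ∈ Finset.range M,
      (P^2 * ((Nat.choose k j : ℝ) * ((Nat.choose k j : ℝ) * (-((k:ℝ) - 2*j))))) * (Real.pi / 2)
      = -(P^2 * (Real.pi / 2)) * ∑ j ∈ Finset.range M, ((k:ℝ) - 2*j) * (Nat.choose k j : ℝ)^2 := by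
    rw [Finset.mul_sum]
    refine Finset.sum_congr rfl fun j hj => ?_
    ring
  rw [this, comb_id k hk]
  have hPpi : P^2 * (Real.pi / 2) = Real.pi / 2 ^ (2*k - 1) := by
    have hcast2 : ((2*k - 1 : ℕ) : ℤ) = 2*(k:ℤ) - 1 := by
      push_cast [Nat.cast_sub (by omega : 1 ≤ 2*k)]; ring
    have hsq : P^2 = (2:ℝ) ^ (2 - 2*(k:ℤ)) := by
      rw [hP, sq, ← zpow_add₀ (two_ne_zero)]
      congr 1; ring
    rw [hsq]
    rw [show ((2:ℝ) ^ (2*k-1 : ℕ)) = (2:ℝ) ^ ((2*k-1 : ℕ) : ℤ) from (zpow_natCast _ _).symm, hcast2]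
    rw [eq_div_iff (zpow_ne_zero _ (two_ne_zero : (2:ℝ) ≠ 0))]
    have h1 : (2:ℝ)^(2 - 2*(k:ℤ)) * (2:ℝ)^(2*(k:ℤ) - 1) = 2 := by
      rw [← zpow_add₀ (two_ne_zero : (2:ℝ) ≠ 0)]; norm_num
    linear_combination (Real.pi / 2) * h1
  rw [hPpi]
  ring
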